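/- Let V̄ be a finite dimensional vector space over a field of characteristic zero and N : V̄ → V̄ a nilpotent endomorphism with N ≠ 0, N² = 0, and dim(im N) = 2. Then for every 2 ≤ i ≤ dim V̄ − 2, the induced derivation on ∧^i V̄ has nilpotency index exactly 2. -/

import Mathlib

open Function

/-- `ιMulti` of a linearly independent family is nonzero. -/
private lemma aux_iMulti_ne_zero {F : Type*} [Field F] {V : Type*} [AddCommGroup V] [Module F V]
    {n : ℕ} {w : Fin n → V} (hw : LinearIndependent F w) :
    ExteriorAlgebra.ιMulti F n w ≠ 0 := by
  classical
  obtain ⟨g, hg⟩ := (Submodule.span F (Set.range w)).subtype.exists_leftInverse_of_injective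
      (Submodule.ker_subtype _)
  set bW : Module.Basis (Fin n) F _ := Module.Basis.span hw with hbW
  set f : V [⋀^Fin n]→ₗ[F] F := bW.det.compLinearMap g with hf
  have hfw : f w = 1 := by
    have h1 : (fun j => g (w j)) = bW := by
      funext j
      have h2 : w j = (Submodule.span F (Set.range w)).subtype (bW j) :=
        congrArg Subtype.val (Module.Basis.span_apply hw j).symm
      rw [h2, ← LinearMap.comp_apply, hg, LinearMap.id_apply]
    show bW.det (fun j => g (w j)) = 1
    rw [h1, Module.Basis.det_self]
  intro h
  have h3 := ExteriorAlgebra.liftAlternating_apply_ιMulti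
      (R := F) (M := V) (N := F)
      (Function.update (fun j => (0 : V [⋀^Fin j]→ₗ[F] F)) n f) w
  rw [h, map_zero, Function.update_self, hfw] at h3
  exact one_ne_zero h3.symm

/-- Three entries of a family lying in a 2-dimensional subspace force linear dependence. -/
private lemma aux_dep {F : Type*} [Field F] {V : Type*} [AddCommGroup V] [Module F V]
    [FiniteDimensional F V] (W : Submodule F V) (hW : Module.finrank F W = 2)
    {n : ℕ} (w : Fin n → V) (a b c : Fin n) (hab : a ≠ b) (hac : a ≠ c) (hbc : b ≠ c)
    (ha : w a ∈ W) (hb : w b ∈ W) (hc : w c ∈ W) : ¬ LinearIndependent F w := by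
  intro h
  let g : Fin 3 → Fin n := ![a, b, c]
  have hg : Function.Injective g := by
    intro x y hxy
    fin_cases x <;> fin_cases y <;>
      simp_all [g, hab, hac, hbc, hab.symm, hac.symm, hbc.symm]
  have h2 := h.comp g hg
  let x : Fin 3 → W := fun t => ⟨w (g t), by fin_cases t <;> assumption⟩
  have hx : LinearIndependent F x :=
    LinearIndependent.of_comp W.subtype (by exact h2)
  have := hx.fintype_card_le_finrank
  rw [Fintype.card_fin, hW] at this
  omega



/-- Let `V` be a finite dimensional vector space over a field of characteristic zero and
`N : V → V` a nilpotent endomorphism with `N ≠ 0`, `N² = 0` and `dim(im N) = 2`.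
Then for every `2 ≤ i ≤ dim V − 2`, the induced derivation `D` on the exterior power
`⋀^i V` (characterized by `D (x₁ ∧ ⋯ ∧ x_i) = ∑_j x₁ ∧ ⋯ ∧ N x_j ∧ ⋯ ∧ x_i`)
has nilpotency index exactly `2`, i.e. `D² ≠ 0` and `D³ = 0`. -/
theorem exterior_power_derivation_nilpotency_index_typeII
    {F : Type*} [Field F] [CharZero F]
    {V : Type*} [AddCommGroup V] [Module F V] [FiniteDimensional F V]
    (N : Module.End F V)
    (hN1 : N ≠ 0) (hN2 : N ^ 2 = 0)
    (hrk : Module.finrank F (LinearMap.range N) = 2)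
    (i : ℕ) (hi2 : 2 ≤ i) (hi : i ≤ Module.finrank F V - 2)
    (D : Module.End F (⋀[F]^i V))
    (hD : ∀ v : Fin i → V,
      (D ⟨ExteriorAlgebra.ιMulti F i v,
            ExteriorAlgebra.ιMulti_range F i (Set.mem_range_self v)⟩ :
          ExteriorAlgebra F V)
        = ∑ j : Fin i, ExteriorAlgebra.ιMulti F i (Function.update v j (N (v j)))) :
    D ^ 2 ≠ 0 ∧ D ^ 3 = 0 := by
  classical
  let el : (Fin i → V) → ⋀[F]^i V := fun v =>
    ⟨ExteriorAlgebra.ιMulti F i v, ExteriorAlgebra.ιMulti_range F i (Set.mem_range_self v)⟩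
  have hN2' : ∀ x, N (N x) = 0 := by
    intro x
    have := LinearMap.ext_iff.mp hN2 x
    simpa [pow_succ, Module.End.mul_apply] using this
  have hD' : ∀ v, D (el v) = ∑ j, el (Function.update v j (N (v j))) := by
    intro v
    refine Subtype.ext ?_
    rw [Submodule.coe_sum]
    exact hD v
  have hel0 : ∀ (w : Fin i → V), ¬ LinearIndependent F w → el w = 0 := by
    intro w hw
    refine Subtype.ext ?_
    show ExteriorAlgebra.ιMulti F i w = _
    rw [Submodule.coe_zero]
    exact AlternatingMap.map_linearDependent _ w hw
  have hD2 : ∀ v, (D ^ 2) (el v) = ∑ j, ∑ k,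
      el (Function.update (Function.update v j (N (v j))) k
        (N (Function.update v j (N (v j)) k))) := by
    intro v
    rw [pow_two, Module.End.mul_apply, hD' v, map_sum]
    exact Finset.sum_congr rfl fun j _ => hD' _
  -- key vanishing lemma: applying D to any second-order term gives zero
  have key : ∀ (w : Fin i → V) (j k : Fin i),
      D (el (Function.update (Function.update w j (N (w j))) k
        (N (Function.update w j (N (w j)) k)))) = 0 := by
    intro w j k
    set w2 := Function.update (Function.update w j (N (w j))) k
        (N (Function.update w j (N (w j)) k)) with hw2
    rw [hD']
    apply Finset.sum_eq_zero
    intro l _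
    apply hel0
    by_cases hjk : j = k
    · subst hjk
      have hz : w2 j = 0 := by
        rw [hw2, Function.update_self, Function.update_self, hN2']
      intro hind
      by_cases hlj : l = j
      · subst hlj
        exact hind.ne_zero l (by rw [Function.update_self, hz, map_zero])
      · exact hind.ne_zero j (by rw [Function.update_of_ne (Ne.symm hlj) _ w2, hz])
    · have hw2j : w2 j = N (w j) := by
        rw [hw2, Function.update_of_ne hjk, Function.update_self]
      have hw2k : w2 k = N (Function.update w j (N (w j)) k) := by
        rw [hw2, Function.update_self]
      by_cases hlj : l = j
      · subst hlj
        intro hind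
        exact hind.ne_zero l (by rw [Function.update_self, hw2j, hN2'])
      · by_cases hlk : l = k
        · subst hlk
          intro hind
          exact hind.ne_zero l (by rw [Function.update_self, hw2k, hN2'])
        · -- three distinct positions j, k, l with values in range N
          refine aux_dep (LinearMap.range N) hrk _ j k l hjk
            (Ne.symm hlj) (Ne.symm hlk) ?_ ?_ ?_
          · rw [Function.update_of_ne (Ne.symm hlj), hw2j]
            exact LinearMap.mem_range_self N _
          · rw [Function.update_of_ne (Ne.symm hlk), hw2k]
            exact LinearMap.mem_range_self N _
          · rw [Function.update_self]
            exact LinearMap.mem_range_self N _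
  have hD3el : ∀ v, (D ^ 3) (el v) = 0 := by
    intro v
    have h3 : (D ^ 3) (el v) = D ((D ^ 2) (el v)) := by
      rw [pow_succ', Module.End.mul_apply]
    rw [h3, hD2, map_sum]
    refine Finset.sum_eq_zero fun j _ => ?_
    rw [map_sum]
    exact Finset.sum_eq_zero fun k _ => key v j k
  have hD3 : D ^ 3 = 0 := by
    have hle : Submodule.span F (Set.range (ExteriorAlgebra.ιMulti F i (M := V))) ≤
        (LinearMap.ker (D ^ 3)).map (⋀[F]^i V).subtype := by
      rw [Submodule.span_le]
      rintro _ ⟨v, rfl⟩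
      exact ⟨el v, LinearMap.mem_ker.mpr (hD3el v), rfl⟩
    apply LinearMap.ext
    intro x
    obtain ⟨y, hy, hyx⟩ := hle (by
      rw [ExteriorAlgebra.ιMulti_span_fixedDegree]; exact x.2)
    have hxy : y = x := Subtype.ext hyx
    rw [LinearMap.zero_apply, ← hxy]
    exact LinearMap.mem_ker.mp hy
  refine ⟨?_, hD3⟩
  -- Now prove D ^ 2 ≠ 0
  have hWK : LinearMap.range N ≤ LinearMap.ker N := by
    rintro _ ⟨x, rfl⟩
    exact LinearMap.mem_ker.mpr (hN2' x)
  have hKrank : i ≤ Module.finrank F (LinearMap.ker N) := by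
    have h := LinearMap.finrank_range_add_finrank_ker N
    omega
  let bW : Module.Basis (Fin 2) F (LinearMap.range N) := Module.finBasisOfFinrankEq F _ hrk
  let w' : Fin 2 → LinearMap.ker N := fun t => Submodule.inclusion hWK (bW t)
  have hw' : LinearIndependent F w' :=
    bW.linearIndependent.map' (Submodule.inclusion hWK) (Submodule.ker_inclusion _ _ _)
  have hs : LinearIndepOn F id (Set.range w') := (linearIndepOn_id_range_iff hw'.injective).mpr hw'
  let b := Module.Basis.extend hs
  haveI : Fintype ↥(hs.extend (Set.subset_univ _)) := FiniteDimensional.fintypeBasisIndex b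
  have hcard : i ≤ Fintype.card ↥(hs.extend (Set.subset_univ _)) := by
    rw [← Module.finrank_eq_card_basis b]; exact hKrank
  obtain ⟨e⟩ : Nonempty (Fin i ↪ ↥(hs.extend (Set.subset_univ _))) :=
    Function.Embedding.nonempty_of_card_le (by rwa [Fintype.card_fin])
  let a : Fin i := ⟨0, by omega⟩
  let c : Fin i := ⟨1, by omega⟩
  have hac : a ≠ c := by simp [a, c, Fin.ext_iff]
  let t0 : ↥(hs.extend (Set.subset_univ _)) :=
    ⟨w' 0, hs.subset_extend (Set.subset_univ _) (Set.mem_range_self 0)⟩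
  let t1 : ↥(hs.extend (Set.subset_univ _)) :=
    ⟨w' 1, hs.subset_extend (Set.subset_univ _) (Set.mem_range_self 1)⟩
  have ht01 : t0 ≠ t1 := by
    intro h
    have h2 : w' 0 = w' 1 := Subtype.ext_iff.mp h
    have h3 : (0 : Fin 2) = 1 := hw'.injective h2
    exact absurd h3 (by decide)
  let e1 : Fin i ↪ ↥(hs.extend (Set.subset_univ _)) :=
    e.trans (Equiv.swap (e a) t0).toEmbedding
  have he1a : e1 a = t0 := by
    show (Equiv.swap (e a) t0) (e a) = t0
    rw [Equiv.swap_apply_left]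
  let e2 : Fin i ↪ ↥(hs.extend (Set.subset_univ _)) :=
    e1.trans (Equiv.swap (e1 c) t1).toEmbedding
  have he2c : e2 c = t1 := by
    show (Equiv.swap (e1 c) t1) (e1 c) = t1
    rw [Equiv.swap_apply_left]
  have he2a : e2 a = t0 := by
    show (Equiv.swap (e1 c) t1) (e1 a) = t0
    rw [he1a]
    refine Equiv.swap_apply_of_ne_of_ne ?_ ht01
    rw [← he1a]
    exact fun h => hac (e1.injective h)
  let y : Fin i → V := fun m => ((b (e2 m) : LinearMap.ker N) : V)
  have hy : LinearIndependent F y := by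
    have h1 := b.linearIndependent.comp e2 e2.injective
    exact h1.map' (LinearMap.ker N).subtype (Submodule.ker_subtype _)
  have hyK : ∀ m, N (y m) = 0 := fun m => (b (e2 m)).2
  have hya : y a = ((bW 0 : LinearMap.range N) : V) := by
    show ((b (e2 a) : LinearMap.ker N) : V) = _
    rw [he2a, Module.Basis.extend_apply_self]
    rfl
  have hyc : y c = ((bW 1 : LinearMap.range N) : V) := by
    show ((b (e2 c) : LinearMap.ker N) : V) = _
    rw [he2c, Module.Basis.extend_apply_self]
    rfl
  obtain ⟨u0, hu0⟩ := (bW 0).2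
  obtain ⟨u1, hu1⟩ := (bW 1).2
  let z : Fin i → V := fun m => if m = a then u0 else if m = c then u1 else y m
  have hza : z a = u0 := if_pos rfl
  have hzc : z c = u1 := by simp [z, Ne.symm hac]
  have hzm : ∀ m, m ≠ a → m ≠ c → z m = y m := by
    intro m h1 h2; simp [z, h1, h2]
  have hNza : N (z a) = y a := by rw [hza, hu0, hya]
  have hNzc : N (z c) = y c := by rw [hzc, hu1, hyc]
  have hNzm : ∀ m, m ≠ a → m ≠ c → N (z m) = 0 := fun m h1 h2 => by
    rw [hzm m h1 h2]; exact hyK m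
  have hfam : ∀ (p q : Fin i), p ≠ q → N (z p) = y p → N (z q) = y q →
      (∀ m, m ≠ p → m ≠ q → z m = y m) →
      Function.update (Function.update z p (N (z p))) q
        (N (Function.update z p (N (z p)) q)) = y := by
    intro p q hpq hp hq hother
    funext m
    by_cases hmq : m = q
    · subst hmq
      rw [Function.update_self, Function.update_of_ne (Ne.symm hpq), hq]
    · rw [Function.update_of_ne hmq]
      by_cases hmp : m = p
      · subst hmp; rw [Function.update_self, hp]
      · rw [Function.update_of_ne hmp, hother m hmp hmq]
  have tzero : ∀ j k : Fin i, ¬(j = a ∧ k = c) → ¬(j = c ∧ k = a) →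
      el (Function.update (Function.update z j (N (z j))) k
        (N (Function.update z j (N (z j)) k))) = 0 := by
    intro j k h1 h2
    apply hel0
    intro hind
    by_cases hjk : k = j
    · subst hjk
      exact hind.ne_zero k (by rw [Function.update_self, Function.update_self, hN2'])
    · by_cases hja : j = a
      · subst hja
        have hkc : k ≠ c := fun h => h1 ⟨rfl, h⟩
        exact hind.ne_zero k (by
          rw [Function.update_self, Function.update_of_ne hjk, hNzm k hjk hkc])
      · by_cases hjc : j = c
        · subst hjc
          have hka : k ≠ a := fun h => h2 ⟨rfl, h⟩
          exact hind.ne_zero k (by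
            rw [Function.update_self, Function.update_of_ne hjk, hNzm k hka hjk])
        · exact hind.ne_zero j (by
            rw [Function.update_of_ne (Ne.symm hjk), Function.update_self,
              hNzm j hja hjc])
  have hta_c : el (Function.update (Function.update z a (N (z a))) c
      (N (Function.update z a (N (z a)) c))) = el y := by
    rw [hfam a c hac hNza hNzc (fun m hm1 hm2 => hzm m hm1 hm2)]
  have htc_a : el (Function.update (Function.update z c (N (z c))) a
      (N (Function.update z c (N (z c)) a))) = el y := by
    rw [hfam c a (Ne.symm hac) hNzc hNza (fun m hm1 hm2 => hzm m hm2 hm1)]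
  have hsum : (D ^ 2) (el z) = el y + el y := by
    rw [hD2]
    have inner_a : (∑ k, el (Function.update (Function.update z a (N (z a))) k
        (N (Function.update z a (N (z a)) k)))) = el y := by
      rw [Finset.sum_eq_single c (fun k _ hk =>
          tzero a k (fun h => hk h.2) (fun h => hac h.1))
        (fun h => absurd (Finset.mem_univ c) h)]
      exact hta_c
    have inner_c : (∑ k, el (Function.update (Function.update z c (N (z c))) k
        (N (Function.update z c (N (z c)) k)))) = el y := by
      rw [Finset.sum_eq_single a (fun k _ hk =>
          tzero c k (fun h => hac (h.1.symm ▸ rfl)) (fun h => hk h.2))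
        (fun h => absurd (Finset.mem_univ a) h)]
      exact htc_a
    have houter0 : ∀ j ∈ Finset.univ, j ∉ ({a, c} : Finset (Fin i)) →
        (∑ k, el (Function.update (Function.update z j (N (z j))) k
          (N (Function.update z j (N (z j)) k)))) = 0 := by
      intro j _ hj
      rw [Finset.mem_insert, Finset.mem_singleton] at hj
      push_neg at hj
      exact Finset.sum_eq_zero fun k _ => tzero j k (fun h => hj.1 h.1) (fun h => hj.2 h.1)
    rw [← Finset.sum_subset (Finset.subset_univ ({a, c} : Finset (Fin i))) houter0,
      Finset.sum_pair hac, inner_a, inner_c]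
  have hyne : el y ≠ 0 := by
    intro h
    exact aux_iMulti_ne_zero hy (congrArg Subtype.val h)
  have h2ne : el y + el y ≠ 0 := by
    intro h
    have h2 : (2 : F) • el y = 0 := by rw [two_smul]; exact h
    rcases smul_eq_zero.mp h2 with h' | h'
    · exact two_ne_zero h'
    · exact hyne h'
  intro hD20
  rw [hD20] at hsum
  rw [LinearMap.zero_apply] at hsum
  exact h2ne hsum.symm
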